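/- A closed model category C is left proper if and only if for every weak equivalence g: X→Y in C, the Quillen adjunction (g_!, g^*): (X↓C) → (Y↓C) is a Quillen equivalence. -/

import Mathlib

open CategoryTheory CategoryTheory.Limits

universe v u v' u'

/-- `f` is a retract of `g` in the arrow category. -/
def IsRetractOfArrow {C : Type u} [Category.{v} C] {A B A' B' : C}
    (f : A ⟶ B) (g : A' ⟶ B') : Prop :=
  ∃ (i : Arrow.mk f ⟶ Arrow.mk g) (r : Arrow.mk g ⟶ Arrow.mk f), i ≫ r = 𝟙 (Arrow.mk f)

/-- A (closed) model structure on a category `C`, in the sense of Quillen: three classes of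
morphisms (cofibrations, fibrations, weak equivalences) satisfying the two-out-of-three
axiom, closure under retracts, the lifting axioms and the factorization axioms. -/
structure ModelStruct (C : Type u) [Category.{v} C] : Type (max u v) where
  cof : MorphismProperty C
  fib : MorphismProperty C
  weq : MorphismProperty C
  weq_comp : ∀ {X Y Z : C} (f : X ⟶ Y) (g : Y ⟶ Z), weq f → weq g → weq (f ≫ g)
  weq_cancel_left : ∀ {X Y Z : C} (f : X ⟶ Y) (g : Y ⟶ Z), weq f → weq (f ≫ g) → weq g
  weq_cancel_right : ∀ {X Y Z : C} (f : X ⟶ Y) (g : Y ⟶ Z), weq g → weq (f ≫ g) → weq f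
  cof_retract : ∀ {A B A' B' : C} {f : A ⟶ B} {g : A' ⟶ B'},
    IsRetractOfArrow f g → cof g → cof f
  fib_retract : ∀ {A B A' B' : C} {f : A ⟶ B} {g : A' ⟶ B'},
    IsRetractOfArrow f g → fib g → fib f
  weq_retract : ∀ {A B A' B' : C} {f : A ⟶ B} {g : A' ⟶ B'},
    IsRetractOfArrow f g → weq g → weq f
  lifting_cof_trivFib : ∀ {A B X Y : C} (i : A ⟶ B) (p : X ⟶ Y),
    cof i → fib p → weq p → HasLiftingProperty i p
  lifting_trivCof_fib : ∀ {A B X Y : C} (i : A ⟶ B) (p : X ⟶ Y),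
    cof i → weq i → fib p → HasLiftingProperty i p
  factor_cof_trivFib : ∀ {X Y : C} (f : X ⟶ Y),
    ∃ (Z : C) (i : X ⟶ Z) (p : Z ⟶ Y), cof i ∧ fib p ∧ weq p ∧ i ≫ p = f
  factor_trivCof_fib : ∀ {X Y : C} (f : X ⟶ Y),
    ∃ (Z : C) (i : X ⟶ Z) (p : Z ⟶ Y), cof i ∧ weq i ∧ fib p ∧ i ≫ p = f

variable {C : Type u} [Category.{v} C]

/-- An object is cofibrant if the unique map from the initial object to it is a cofibration. -/
def ModelStruct.Cofibrant [HasInitial C] (M : ModelStruct C) (A : C) : Prop :=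
  M.cof (initial.to A)

/-- An object is fibrant if the unique map from it to the terminal object is a fibration. -/
def ModelStruct.Fibrant [HasTerminal C] (M : ModelStruct C) (A : C) : Prop :=
  M.fib (terminal.from A)

/-- The induced model structure on the coslice category `(X ↓ C)`: a morphism is a
cofibration, fibration or weak equivalence iff its underlying morphism in `C` is one. -/
def ModelStruct.under (M : ModelStruct C) (X : C) : ModelStruct (Under X) where
  cof _ _ f := M.cof f.right
  fib _ _ f := M.fib f.right
  weq _ _ f := M.weq f.right
  weq_comp f g hf hg := by simpa using M.weq_comp f.right g.right hf hg
  weq_cancel_left f g hf hfg := M.weq_cancel_left f.right g.right hf (by simpa using hfg)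
  weq_cancel_right f g hg hfg := M.weq_cancel_right f.right g.right hg (by simpa using hfg)
  cof_retract := fun ⟨i, r, hir⟩ hg => M.cof_retract
    ⟨(Under.forget X).mapArrow.map i, (Under.forget X).mapArrow.map r,
      by have h := congrArg (fun k => (Under.forget X).mapArrow.map k) hir; simp only [CategoryTheory.Functor.map_comp, CategoryTheory.Functor.map_id] at h; exact h⟩ hg
  fib_retract := fun ⟨i, r, hir⟩ hg => M.fib_retract
    ⟨(Under.forget X).mapArrow.map i, (Under.forget X).mapArrow.map r,
      by have h := congrArg (fun k => (Under.forget X).mapArrow.map k) hir; simp only [CategoryTheory.Functor.map_comp, CategoryTheory.Functor.map_id] at h; exact h⟩ hg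
  weq_retract := fun ⟨i, r, hir⟩ hg => M.weq_retract
    ⟨(Under.forget X).mapArrow.map i, (Under.forget X).mapArrow.map r,
      by have h := congrArg (fun k => (Under.forget X).mapArrow.map k) hir; simp only [CategoryTheory.Functor.map_comp, CategoryTheory.Functor.map_id] at h; exact h⟩ hg
  lifting_cof_trivFib i p hi hp hp' := by
    constructor
    intro f g sq
    haveI := M.lifting_cof_trivFib i.right p.right hi hp hp'
    have sq' : CommSq f.right i.right p.right g.right :=
      ⟨by rw [← Under.comp_right, sq.w, Under.comp_right]⟩
    exact ⟨⟨⟨Under.homMk sq'.lift (by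
        rw [← Under.w i, Category.assoc, sq'.fac_left, Under.w f]),
      by ext; exact sq'.fac_left, by ext; exact sq'.fac_right⟩⟩⟩
  lifting_trivCof_fib i p hi hi' hp := by
    constructor
    intro f g sq
    haveI := M.lifting_trivCof_fib i.right p.right hi hi' hp
    have sq' : CommSq f.right i.right p.right g.right :=
      ⟨by rw [← Under.comp_right, sq.w, Under.comp_right]⟩
    exact ⟨⟨⟨Under.homMk sq'.lift (by
        rw [← Under.w i, Category.assoc, sq'.fac_left, Under.w f]),
      by ext; exact sq'.fac_left, by ext; exact sq'.fac_right⟩⟩⟩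
  factor_cof_trivFib {A B} f := by
    obtain ⟨Z, i, p, hi, hp, hp', hfac⟩ := M.factor_cof_trivFib f.right
    exact ⟨Under.mk (A.hom ≫ i), Under.homMk i rfl,
      Under.homMk p (by show (A.hom ≫ i) ≫ p = B.hom; rw [Category.assoc, hfac, Under.w f]),
      hi, hp, hp', by ext; exact hfac⟩
  factor_trivCof_fib {A B} f := by
    obtain ⟨Z, i, p, hi, hi', hp, hfac⟩ := M.factor_trivCof_fib f.right
    exact ⟨Under.mk (A.hom ≫ i), Under.homMk i rfl,
      Under.homMk p (by show (A.hom ≫ i) ≫ p = B.hom; rw [Category.assoc, hfac, Under.w f]),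
      hi, hi', hp, by ext; exact hfac⟩

/-- The induced model structure on the slice category `(C ↓ X)`: a morphism is a
cofibration, fibration or weak equivalence iff its underlying morphism in `C` is one. -/
def ModelStruct.over (M : ModelStruct C) (X : C) : ModelStruct (Over X) where
  cof _ _ f := M.cof f.left
  fib _ _ f := M.fib f.left
  weq _ _ f := M.weq f.left
  weq_comp f g hf hg := by simpa using M.weq_comp f.left g.left hf hg
  weq_cancel_left f g hf hfg := M.weq_cancel_left f.left g.left hf (by simpa using hfg)
  weq_cancel_right f g hg hfg := M.weq_cancel_right f.left g.left hg (by simpa using hfg)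
  cof_retract := fun ⟨i, r, hir⟩ hg => M.cof_retract
    ⟨(Over.forget X).mapArrow.map i, (Over.forget X).mapArrow.map r,
      by have h := congrArg (fun k => (Over.forget X).mapArrow.map k) hir; simp only [CategoryTheory.Functor.map_comp, CategoryTheory.Functor.map_id] at h; exact h⟩ hg
  fib_retract := fun ⟨i, r, hir⟩ hg => M.fib_retract
    ⟨(Over.forget X).mapArrow.map i, (Over.forget X).mapArrow.map r,
      by have h := congrArg (fun k => (Over.forget X).mapArrow.map k) hir; simp only [CategoryTheory.Functor.map_comp, CategoryTheory.Functor.map_id] at h; exact h⟩ hg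
  weq_retract := fun ⟨i, r, hir⟩ hg => M.weq_retract
    ⟨(Over.forget X).mapArrow.map i, (Over.forget X).mapArrow.map r,
      by have h := congrArg (fun k => (Over.forget X).mapArrow.map k) hir; simp only [CategoryTheory.Functor.map_comp, CategoryTheory.Functor.map_id] at h; exact h⟩ hg
  lifting_cof_trivFib i p hi hp hp' := by
    constructor
    intro f g sq
    haveI := M.lifting_cof_trivFib i.left p.left hi hp hp'
    have sq' : CommSq f.left i.left p.left g.left :=
      ⟨by rw [← Over.comp_left, sq.w, Over.comp_left]⟩
    exact ⟨⟨⟨Over.homMk sq'.lift (by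
        rw [← Over.w p, ← Category.assoc, sq'.fac_right, Over.w g]),
      by ext; exact sq'.fac_left, by ext; exact sq'.fac_right⟩⟩⟩
  lifting_trivCof_fib i p hi hi' hp := by
    constructor
    intro f g sq
    haveI := M.lifting_trivCof_fib i.left p.left hi hi' hp
    have sq' : CommSq f.left i.left p.left g.left :=
      ⟨by rw [← Over.comp_left, sq.w, Over.comp_left]⟩
    exact ⟨⟨⟨Over.homMk sq'.lift (by
        rw [← Over.w p, ← Category.assoc, sq'.fac_right, Over.w g]),
      by ext; exact sq'.fac_left, by ext; exact sq'.fac_right⟩⟩⟩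
  factor_cof_trivFib {A B} f := by
    obtain ⟨Z, i, p, hi, hp, hp', hfac⟩ := M.factor_cof_trivFib f.left
    exact ⟨Over.mk (p ≫ B.hom), Over.homMk i (by show i ≫ (p ≫ B.hom) = A.hom; rw [← Category.assoc, hfac, Over.w f]),
      Over.homMk p rfl, hi, hp, hp', by ext; exact hfac⟩
  factor_trivCof_fib {A B} f := by
    obtain ⟨Z, i, p, hi, hi', hp, hfac⟩ := M.factor_trivCof_fib f.left
    exact ⟨Over.mk (p ≫ B.hom), Over.homMk i (by show i ≫ (p ≫ B.hom) = A.hom; rw [← Category.assoc, hfac, Over.w f]),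
      Over.homMk p rfl, hi, hi', hp, by ext; exact hfac⟩

noncomputable instance (X : C) : HasInitial (Under X) :=
  Under.mkIdInitial.hasInitial

noncomputable instance (X : C) : HasTerminal (Over X) :=
  Over.mkIdTerminal.hasTerminal

/-- The terminal object of `(X ↓ C)` is `X ⟶ *`. -/
noncomputable def underMkTerminal [HasTerminal C] (X : C) :
    IsTerminal (Under.mk (terminal.from X)) :=
  IsTerminal.ofUniqueHom (fun u => Under.homMk (terminal.from u.right)
      (terminal.hom_ext _ _))
    (fun u m => by ext; exact terminal.hom_ext _ _)

noncomputable instance [HasTerminal C] (X : C) : HasTerminal (Under X) :=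
  (underMkTerminal X).hasTerminal

/-- The initial object of `(C ↓ X)` is `∅ ⟶ X`. -/
noncomputable def overMkInitial [HasInitial C] (X : C) :
    IsInitial (Over.mk (initial.to X)) :=
  IsInitial.ofUniqueHom (fun u => Over.homMk (initial.to u.left)
      (initial.hom_ext _ _))
    (fun u m => by ext; exact initial.hom_ext _ _)

noncomputable instance [HasInitial C] (X : C) : HasInitial (Over X) :=
  (overMkInitial X).hasInitial

/-- A Quillen adjunction between model categories: an adjoint pair whose left adjoint
preserves cofibrations and acyclic cofibrations. -/
structure QuillenAdjunction {C : Type u} [Category.{v} C] {D : Type u'} [Category.{v'} D]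
    (M : ModelStruct C) (N : ModelStruct D) (F : C ⥤ D) (G : D ⥤ C) where
  adj : F ⊣ G
  map_cof : ∀ {A B : C} (f : A ⟶ B), M.cof f → N.cof (F.map f)
  map_trivCof_weq : ∀ {A B : C} (f : A ⟶ B), M.cof f → M.weq f → N.weq (F.map f)

/-- A Quillen adjunction is a Quillen equivalence if for every cofibrant `A` and fibrant `B`,
a map `F A ⟶ B` is a weak equivalence iff its adjunct `A ⟶ G B` is. -/
def IsQuillenEquivalence {C : Type u} [Category.{v} C] {D : Type u'} [Category.{v'} D]
    [HasInitial C] [HasTerminal D]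
    (M : ModelStruct C) (N : ModelStruct D) {F : C ⥤ D} {G : D ⥤ C} (adj : F ⊣ G) : Prop :=
  ∀ (A : C) (B : D), M.Cofibrant A → N.Fibrant B →
    ∀ f : F.obj A ⟶ B, N.weq f ↔ M.weq ((adj.homEquiv A B) f)


/-- A closed model category is left proper if every cobase change of a weak equivalence along
a cofibration is a weak equivalence. -/
def ModelStruct.LeftProper {C : Type u} [Category.{v} C] [HasPushouts C]
    (M : ModelStruct C) : Prop :=
  ∀ {X Y Z : C} (g : X ⟶ Y) (u : X ⟶ Z), M.weq g → M.cof u → M.weq (pushout.inl u g)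

lemma retract_comp_iso_left {A A' B : C} (e : A ≅ A') (g : A' ⟶ B) :
    IsRetractOfArrow (e.hom ≫ g) g :=
  ⟨Arrow.homMk (u := e.hom) (v := 𝟙 _) (by simp),
   Arrow.homMk (u := e.inv) (v := 𝟙 _) (by simp), by ext <;> simp⟩

lemma retract_comp_iso_right {A B B' : C} (g : A ⟶ B) (e : B ≅ B') :
    IsRetractOfArrow (g ≫ e.hom) g :=
  ⟨Arrow.homMk (u := 𝟙 _) (v := e.inv) (by simp),
   Arrow.homMk (u := 𝟙 _) (v := e.hom) (by simp), by ext <;> simp⟩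

lemma mapPushoutAdj_homEquiv_right [HasPushouts C] {X Y : C} (g : X ⟶ Y) (A : Under X)
    (B : Under Y) (f : (Under.pushout g).obj A ⟶ B) :
    (((Under.mapPushoutAdj g).homEquiv A B) f).right = pushout.inl A.hom g ≫ f.right := by
  rw [Adjunction.homEquiv_apply]
  simp
  rfl

lemma cofibrant_under_iff (M : ModelStruct C) {X : C} (A : Under X) :
    (M.under X).Cofibrant A ↔ M.cof A.hom := by
  have e : (⊥_ Under X) ≅ Under.mk (𝟙 X) := initialIsoIsInitial Under.mkIdInitial
  let eC : X ≅ (⊥_ Under X).right :=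
    ⟨e.inv.right, e.hom.right,
     by rw [← Under.comp_right, e.inv_hom_id]; simp,
     by rw [← Under.comp_right, e.hom_inv_id]; simp⟩
  have hbot : e.inv.right = (⊥_ Under X).hom := by simpa using Under.w e.inv
  have hA : A.hom = eC.hom ≫ (initial.to A).right := by
    show A.hom = e.inv.right ≫ (initial.to A).right
    rw [hbot]; exact (Under.w (initial.to A)).symm
  constructor
  · intro h
    rw [hA]
    exact M.cof_retract (retract_comp_iso_left eC _) h
  · intro h
    have h2 : (initial.to A).right = eC.inv ≫ A.hom := by
      rw [hA, ← Category.assoc]; simp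
    show M.cof (initial.to A).right
    rw [h2]
    exact M.cof_retract (retract_comp_iso_left eC.symm _) h

lemma fibrant_under_iff (M : ModelStruct C) [HasTerminal C] {Y : C} (B : Under Y) :
    (M.under Y).Fibrant B ↔ M.fib (terminal.from B.right) := by
  have t : (⊤_ Under Y) ≅ Under.mk (terminal.from Y) := terminalIsoIsTerminal (underMkTerminal Y)
  let eT : (⊤_ Under Y).right ≅ ⊤_ C :=
    ⟨t.hom.right, t.inv.right,
     by rw [← Under.comp_right, t.hom_inv_id]; simp,
     by rw [← Under.comp_right, t.inv_hom_id]; simp⟩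
  have key : terminal.from B.right = (terminal.from B).right ≫ eT.hom :=
    terminal.hom_ext _ _
  constructor
  · intro h
    rw [key]
    exact M.fib_retract (retract_comp_iso_right _ eT) h
  · intro h
    have h2 : (terminal.from B).right = terminal.from B.right ≫ eT.inv := by
      rw [key, Category.assoc]; simp
    show M.fib (terminal.from B).right
    rw [h2]
    exact M.fib_retract (retract_comp_iso_right _ eT.symm) h

/-- **Statement 14.** A closed model category `C` is left proper if and only if
`(g_!, g^*) : (X ↓ C) → (Y ↓ C)` is a Quillen equivalence for every weak equivalence
`g : X ⟶ Y`. -/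
theorem left_proper_iff {C : Type u} [Category.{v} C]
    [HasLimits C] [HasColimits C] (M : ModelStruct C) :
    M.LeftProper ↔
      ∀ {X Y : C} (g : X ⟶ Y), M.weq g →
        IsQuillenEquivalence (M.under X) (M.under Y) (Under.mapPushoutAdj g) := by
  constructor
  · intro hlp X Y g hg A B hA hB f
    have hcofA : M.cof A.hom := (cofibrant_under_iff M A).mp hA
    have hinl : M.weq (pushout.inl A.hom g) := hlp g A.hom hg hcofA
    have key := mapPushoutAdj_homEquiv_right g A B f
    constructor
    · intro h
      show M.weq ((((Under.mapPushoutAdj g).homEquiv A B) f).right)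
      rw [key]
      exact M.weq_comp _ _ hinl h
    · intro h
      have h' : M.weq ((((Under.mapPushoutAdj g).homEquiv A B) f).right) := h
      rw [key] at h'
      exact M.weq_cancel_left _ _ hinl h'
  · intro hqe X Y Z g u hg hu
    obtain ⟨B₀, i, p, hi, hi', hp, hfac⟩ := M.factor_trivCof_fib (terminal.from (pushout u g))
    have hA : (M.under X).Cofibrant (Under.mk u) :=
      (cofibrant_under_iff M _).mpr (by simpa using hu)
    have hB : (M.under Y).Fibrant (Under.mk (pushout.inr u g ≫ i)) := by
      rw [fibrant_under_iff]
      show M.fib (terminal.from B₀)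
      rw [show terminal.from B₀ = p from terminal.hom_ext _ _]
      exact hp
    have hfcond : ((Under.pushout g).obj (Under.mk u)).hom ≫ i
        = (Under.mk (pushout.inr u g ≫ i)).hom := by simp; rfl
    let f0 : (Under.pushout g).obj (Under.mk u) ⟶ Under.mk (pushout.inr u g ≫ i) :=
      Under.homMk i hfcond
    have hiff := hqe g hg (Under.mk u) (Under.mk (pushout.inr u g ≫ i)) hA hB f0
    have hfr : (M.under Y).weq f0 := hi'
    have h1 : M.weq ((((Under.mapPushoutAdj g).homEquiv _ _) f0).right) := hiff.mp hfr
    rw [mapPushoutAdj_homEquiv_right] at h1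
    have h2 : M.weq (pushout.inl u g ≫ i) := h1
    exact M.weq_cancel_right _ _ hi' h2
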